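/- arXiv:1805.06812 — 14 statements merged into one kernel-verified Lean document; each statement's English description precedes it below -/
import Mathlib

section
/- The discharge-form Lax curve φ̃_l is strictly concave on (0,∞); that is, for all 0 < h₁ < h₂ and t ∈ (0,1), φ̃_l(t·h₁ + (1−t)·h₂) > t·φ̃_l(h₁) + (1−t)·φ̃_l(h₂). -/
/-- Lax curve through the left state `(hl, vl)`. -/
noncomputable def phil (g hl vl h : ℝ) : ℝ :=
  if h ≤ hl then vl + 2 * Real.sqrt (g * hl) - 2 * Real.sqrt (g * h)
  else vl - (h - hl) * Real.sqrt (g * (h + hl) / (2 * h * hl))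

/-- Discharge-form Lax curve through the left state. -/
noncomputable def philTilde (g hl vl h : ℝ) : ℝ := h * phil g hl vl h

namespace LaxAux

/-- Rarefaction part of the discharge-form Lax curve. -/
noncomputable def rar (g hl vl h : ℝ) : ℝ :=
  (vl + 2 * Real.sqrt (g * hl)) * h - 2 * Real.sqrt g * (h * Real.sqrt h)

/-- Shock part of the discharge-form Lax curve. -/
noncomputable def shk (g hl vl h : ℝ) : ℝ :=
  vl * h - Real.sqrt (g / (2 * hl)) * ((h - hl) * Real.sqrt (h * h + hl * h))

/-- Derivative of the discharge-form Lax curve. -/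
noncomputable def laxD (g hl vl h : ℝ) : ℝ :=
  if h ≤ hl then vl + 2 * Real.sqrt (g * hl) - 3 * Real.sqrt g * Real.sqrt h
  else vl - Real.sqrt (g / (2 * hl)) *
      ((4 * h * h + hl * h - hl * hl) / (2 * Real.sqrt (h * h + hl * h)))

lemma tilde_eq_rar (g hl vl : ℝ) (hg : 0 ≤ g) {h : ℝ} (hh : h ≤ hl) :
    philTilde g hl vl h = rar g hl vl h := by
  unfold philTilde phil rar
  rw [if_pos hh, Real.sqrt_mul hg h]
  ring

lemma tilde_eq_shk (g hl vl : ℝ) (hg : 0 ≤ g) (hhl : 0 < hl) {h : ℝ} (hh : hl ≤ h) :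
    philTilde g hl vl h = shk g hl vl h := by
  rcases eq_or_lt_of_le hh with rfl | hh'
  · unfold philTilde phil shk
    rw [if_pos le_rfl]
    ring
  · have hpos : 0 < h := hhl.trans hh'
    have key : h * Real.sqrt (g * (h + hl) / (2 * h * hl))
        = Real.sqrt (g / (2 * hl)) * Real.sqrt (h * h + hl * h) := by
      have h1 : h * Real.sqrt (g * (h + hl) / (2 * h * hl))
          = Real.sqrt (h * h * (g * (h + hl) / (2 * h * hl))) := by
        rw [Real.sqrt_mul (by positivity), Real.sqrt_mul_self hpos.le]
      rw [h1, ← Real.sqrt_mul (show (0:ℝ) ≤ g / (2 * hl) by positivity)]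
      congr 1
      field_simp
    unfold philTilde phil shk
    rw [if_neg (not_le.2 hh')]
    linear_combination (hl - h) * key

lemma hasDerivAt_rar (g hl vl : ℝ) {h : ℝ} (hh : 0 < h) :
    HasDerivAt (rar g hl vl)
      (vl + 2 * Real.sqrt (g * hl) - 3 * Real.sqrt g * Real.sqrt h) h := by
  have hsq : HasDerivAt Real.sqrt (1 / (2 * Real.sqrt h)) h := Real.hasDerivAt_sqrt hh.ne'
  have h1 : HasDerivAt (fun x => x * Real.sqrt x)
      (1 * Real.sqrt h + h * (1 / (2 * Real.sqrt h))) h := (hasDerivAt_id h).mul hsq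
  have h2 : HasDerivAt (rar g hl vl)
      ((vl + 2 * Real.sqrt (g * hl)) * 1 -
        2 * Real.sqrt g * (1 * Real.sqrt h + h * (1 / (2 * Real.sqrt h)))) h :=
    ((hasDerivAt_id h).const_mul _).sub (h1.const_mul _)
  convert h2 using 1
  have hs : Real.sqrt h ≠ 0 := (Real.sqrt_pos.2 hh).ne'
  have hss : Real.sqrt h * Real.sqrt h = h := Real.mul_self_sqrt hh.le
  field_simp
  linear_combination (-Real.sqrt g) * hss

lemma hasDerivAt_shk (g hl vl : ℝ) (hhl : 0 < hl) {h : ℝ} (hh : 0 < h) :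
    HasDerivAt (shk g hl vl)
      (vl - Real.sqrt (g / (2 * hl)) *
        ((4 * h * h + hl * h - hl * hl) / (2 * Real.sqrt (h * h + hl * h)))) h := by
  have hQ : 0 < h * h + hl * h := by positivity
  have hQd : HasDerivAt (fun x => x * x + hl * x) (1 * h + h * 1 + hl * 1) h :=
    ((hasDerivAt_id h).mul (hasDerivAt_id h)).add ((hasDerivAt_id h).const_mul hl)
  have hsq : HasDerivAt (fun x => Real.sqrt (x * x + hl * x))
      ((1 * h + h * 1 + hl * 1) / (2 * Real.sqrt (h * h + hl * h))) h := hQd.sqrt hQ.ne'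
  have hm : HasDerivAt (fun x => (x - hl) * Real.sqrt (x * x + hl * x))
      (1 * Real.sqrt (h * h + hl * h) +
        (h - hl) * ((1 * h + h * 1 + hl * 1) / (2 * Real.sqrt (h * h + hl * h)))) h :=
    ((hasDerivAt_id h).sub_const hl).mul hsq
  have h2 : HasDerivAt (shk g hl vl)
      (vl * 1 - Real.sqrt (g / (2 * hl)) *
        (1 * Real.sqrt (h * h + hl * h) +
          (h - hl) * ((1 * h + h * 1 + hl * 1) / (2 * Real.sqrt (h * h + hl * h))))) h :=
    ((hasDerivAt_id h).const_mul vl).sub (hm.const_mul _)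
  convert h2 using 1
  have hs : Real.sqrt (h * h + hl * h) ≠ 0 := (Real.sqrt_pos.2 hQ).ne'
  have hss : Real.sqrt (h * h + hl * h) * Real.sqrt (h * h + hl * h) = h * h + hl * h :=
    Real.mul_self_sqrt hQ.le
  have key : (4 * h * h + hl * h - hl * hl) / (2 * Real.sqrt (h * h + hl * h))
      = 1 * Real.sqrt (h * h + hl * h) +
        (h - hl) * ((1 * h + h * 1 + hl * 1) / (2 * Real.sqrt (h * h + hl * h))) := by
    have hss' : Real.sqrt (h * (h + hl)) * Real.sqrt (h * (h + hl)) = h * (h + hl) :=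
      Real.mul_self_sqrt (by positivity)
    field_simp
    linear_combination (-2 : ℝ) * hss'
  rw [key]
  ring

lemma Ehl (g hl : ℝ) (hg : 0 ≤ g) (hhl : 0 < hl) :
    Real.sqrt (g / (2 * hl)) *
      ((4 * hl * hl + hl * hl - hl * hl) / (2 * Real.sqrt (hl * hl + hl * hl)))
      = Real.sqrt (g * hl) := by
  set u := Real.sqrt (hl * hl + hl * hl) with hudef
  set c := Real.sqrt (g / (2 * hl)) with hcdef
  have hu : u * u = hl * hl + hl * hl := Real.mul_self_sqrt (by positivity)
  have hupos : 0 < u := Real.sqrt_pos.2 (by positivity)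
  have hc : c * c = g / (2 * hl) := Real.mul_self_sqrt (by positivity)
  have hcnn : 0 ≤ c := Real.sqrt_nonneg _
  have hnn : 0 ≤ c * ((4 * hl * hl + hl * hl - hl * hl) / (2 * u)) := by
    have h4 : 0 ≤ 4 * hl * hl + hl * hl - hl * hl := by nlinarith
    exact mul_nonneg hcnn (div_nonneg h4 (by positivity))
  have hsq : (c * ((4 * hl * hl + hl * hl - hl * hl) / (2 * u))) *
      (c * ((4 * hl * hl + hl * hl - hl * hl) / (2 * u))) = g * hl := by
    have e1 : (c * ((4 * hl * hl + hl * hl - hl * hl) / (2 * u))) *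
        (c * ((4 * hl * hl + hl * hl - hl * hl) / (2 * u)))
        = (c * c) * (((4 * hl * hl + hl * hl - hl * hl) *
            (4 * hl * hl + hl * hl - hl * hl)) / (4 * (u * u))) := by
      ring
    rw [e1, hc, hu]
    field_simp
    ring
  rw [show g * hl = (c * ((4 * hl * hl + hl * hl - hl * hl) / (2 * u))) *
      (c * ((4 * hl * hl + hl * hl - hl * hl) / (2 * u))) from hsq.symm]
  exact (Real.sqrt_mul_self hnn).symm

lemma sq_ineq (hl a b : ℝ) (hhl : 0 < hl) (h1 : hl ≤ a) (h2 : a < b) :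
    (4 * a * a + hl * a - hl * hl) ^ 2 * (b * b + hl * b) <
      (4 * b * b + hl * b - hl * hl) ^ 2 * (a * a + hl * a) := by
  have hbr : (4 * a * a + hl * a - hl * hl) ^ 2 * (a + b + hl) <
      (a * a + hl * a) * (4 * a + 4 * b + hl) *
        ((4 * a * a + hl * a - hl * hl) + (4 * b * b + hl * b - hl * hl)) := by
    obtain ⟨x, hx, rfl⟩ : ∃ x, 0 ≤ x ∧ a = hl + x := ⟨a - hl, by linarith, by ring⟩
    obtain ⟨y, hy, rfl⟩ : ∃ y, 0 ≤ y ∧ b = hl + x + y := ⟨b - (hl + x), by linarith, by ring⟩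
    nlinarith [pow_pos hhl 5, mul_nonneg hx hy, mul_nonneg (mul_nonneg hx hx) hy,
      mul_nonneg (mul_nonneg hx hy) hy, mul_nonneg hhl.le (mul_nonneg hx hy),
      mul_nonneg (mul_nonneg hhl.le hhl.le) (mul_nonneg hx hy),
      mul_nonneg (mul_nonneg hhl.le hx) hx, mul_nonneg (mul_nonneg hhl.le hy) hy,
      mul_nonneg hx hx, mul_nonneg hy hy, mul_nonneg hhl.le hx, mul_nonneg hhl.le hy,
      mul_nonneg (mul_nonneg hx hx) hx, mul_nonneg (mul_nonneg hy hy) hy,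
      mul_pos hhl hhl, mul_pos (mul_pos hhl hhl) hhl]
  nlinarith [mul_pos (sub_pos.2 h2) (sub_pos.2 hbr)]

lemma E_mono (hl a b : ℝ) (hhl : 0 < hl) (h1 : hl ≤ a) (h2 : a < b) :
    (4 * a * a + hl * a - hl * hl) / (2 * Real.sqrt (a * a + hl * a)) <
      (4 * b * b + hl * b - hl * hl) / (2 * Real.sqrt (b * b + hl * b)) := by
  have ha : 0 < a := hhl.trans_le h1
  have hb : 0 < b := ha.trans h2
  have hQa : 0 < Real.sqrt (a * a + hl * a) := Real.sqrt_pos.2 (by positivity)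
  have hQb : 0 < Real.sqrt (b * b + hl * b) := Real.sqrt_pos.2 (by positivity)
  rw [div_lt_div_iff₀ (by positivity) (by positivity)]
  have hNa : 0 ≤ 4 * a * a + hl * a - hl * hl := by nlinarith
  have hNb : 0 ≤ 4 * b * b + hl * b - hl * hl := by nlinarith
  have sqa : Real.sqrt (a * a + hl * a) ^ 2 = a * a + hl * a := Real.sq_sqrt (by positivity)
  have sqb : Real.sqrt (b * b + hl * b) ^ 2 = b * b + hl * b := Real.sq_sqrt (by positivity)
  have key : ((4 * a * a + hl * a - hl * hl) * (2 * Real.sqrt (b * b + hl * b))) ^ 2 <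
      ((4 * b * b + hl * b - hl * hl) * (2 * Real.sqrt (a * a + hl * a))) ^ 2 := by
    have e1 : ((4 * a * a + hl * a - hl * hl) * (2 * Real.sqrt (b * b + hl * b))) ^ 2
        = 4 * ((4 * a * a + hl * a - hl * hl) ^ 2 * (Real.sqrt (b * b + hl * b) ^ 2)) := by
      ring
    have e2 : ((4 * b * b + hl * b - hl * hl) * (2 * Real.sqrt (a * a + hl * a))) ^ 2
        = 4 * ((4 * b * b + hl * b - hl * hl) ^ 2 * (Real.sqrt (a * a + hl * a) ^ 2)) := by
      ring
    rw [e1, e2, sqa, sqb]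
    have := sq_ineq hl a b hhl h1 h2
    linarith
  exact lt_of_pow_lt_pow_left₀ 2 (by positivity) key

lemma laxD_anti (g hl vl : ℝ) (hg : 0 < g) (hhl : 0 < hl) :
    StrictAntiOn (laxD g hl vl) (Set.Ioi 0) := by
  intro a ha b hb hab
  simp only [Set.mem_Ioi] at ha hb
  unfold laxD
  rcases le_or_gt b hl with hbl | hbl
  · rw [if_pos (hab.le.trans hbl), if_pos hbl]
    have hsab : Real.sqrt a < Real.sqrt b := Real.sqrt_lt_sqrt ha.le hab
    have hgp : 0 < Real.sqrt g := Real.sqrt_pos.2 hg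
    nlinarith
  · rw [if_neg (not_le.2 hbl)]
    have hc : 0 < Real.sqrt (g / (2 * hl)) := Real.sqrt_pos.2 (by positivity)
    rcases le_or_gt a hl with hal | hal
    · rw [if_pos hal]
      have hE := E_mono hl hl b hhl le_rfl hbl
      have hEhl := Ehl g hl hg.le hhl
      have h3 : Real.sqrt g * Real.sqrt a ≤ Real.sqrt (g * hl) := by
        rw [Real.sqrt_mul hg.le]
        exact mul_le_mul_of_nonneg_left (Real.sqrt_le_sqrt hal) (Real.sqrt_nonneg g)
      have h4 := mul_lt_mul_of_pos_left hE hc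
      have h5 : 0 < Real.sqrt (g * hl) := Real.sqrt_pos.2 (by positivity)
      nlinarith
    · rw [if_neg (not_le.2 hal)]
      have hE := E_mono hl a b hhl hal.le hab
      have := mul_lt_mul_of_pos_left hE hc
      linarith

lemma hasDerivAt_tilde (g hl vl : ℝ) (hg : 0 < g) (hhl : 0 < hl) {h : ℝ} (hh : 0 < h) :
    HasDerivAt (philTilde g hl vl) (laxD g hl vl h) h := by
  rcases lt_trichotomy h hl with hlt | heq | hgt
  · rw [laxD, if_pos hlt.le]
    apply (hasDerivAt_rar g hl vl hh).congr_of_eventuallyEq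
    filter_upwards [Iio_mem_nhds hlt] with x hx
    exact tilde_eq_rar g hl vl hg.le hx.le
  · subst heq
    have hL : HasDerivWithinAt (philTilde g h vl) (laxD g h vl h) (Set.Iic h) h := by
      rw [laxD, if_pos le_rfl]
      exact ((hasDerivAt_rar g h vl hh).hasDerivWithinAt).congr
        (fun x hx => tilde_eq_rar g h vl hg.le hx)
        (tilde_eq_rar g h vl hg.le le_rfl)
    have hR : HasDerivWithinAt (philTilde g h vl) (laxD g h vl h) (Set.Ici h) h := by
      have hval : laxD g h vl h = vl - Real.sqrt (g / (2 * h)) *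
          ((4 * h * h + h * h - h * h) / (2 * Real.sqrt (h * h + h * h))) := by
        rw [laxD, if_pos le_rfl, Ehl g h hg.le hh, Real.sqrt_mul hg.le h]
        ring
      rw [hval]
      exact ((hasDerivAt_shk g h vl hh hh).hasDerivWithinAt).congr
        (fun x hx => tilde_eq_shk g h vl hg.le hh hx)
        (tilde_eq_shk g h vl hg.le hh le_rfl)
    have huni := hL.union hR
    rw [Set.Iic_union_Ici] at huni
    exact hasDerivWithinAt_univ.mp huni
  · rw [laxD, if_neg (not_le.2 hgt)]
    apply (hasDerivAt_shk g hl vl hhl hh).congr_of_eventuallyEq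
    filter_upwards [Ioi_mem_nhds hgt] with x hx
    exact tilde_eq_shk g hl vl hg.le hhl hx.le

lemma tilde_concave (g hl vl : ℝ) (hg : 0 < g) (hhl : 0 < hl) :
    StrictConcaveOn ℝ (Set.Ioi 0) (philTilde g hl vl) := by
  apply StrictAntiOn.strictConcaveOn_of_deriv (convex_Ioi (0:ℝ))
  · intro x hx
    exact ((hasDerivAt_tilde g hl vl hg hhl hx).continuousAt).continuousWithinAt
  · rw [interior_Ioi]
    intro a ha b hb hab
    rw [(hasDerivAt_tilde g hl vl hg hhl ha).deriv,
      (hasDerivAt_tilde g hl vl hg hhl hb).deriv]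
    exact laxD_anti g hl vl hg hhl ha hb hab

end LaxAux

/-- The discharge-form Lax curve is strictly concave on `(0, ∞)`. -/
theorem philTilde_strictConcave (g hl vl : ℝ) (hg : 0 < g) (hhl : 0 < hl) :
    ∀ h₁ h₂ t : ℝ, 0 < h₁ → h₁ < h₂ → 0 < t → t < 1 →
      philTilde g hl vl (t * h₁ + (1 - t) * h₂) >
        t * philTilde g hl vl h₁ + (1 - t) * philTilde g hl vl h₂ := by
  intro h₁ h₂ t h1 h12 ht0 ht1
  have hc := LaxAux.tilde_concave g hl vl hg hhl
  have := hc.2 (Set.mem_Ioi.2 h1) (Set.mem_Ioi.2 (h1.trans h12)) (ne_of_lt h12)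
    ht0 (by linarith : (0:ℝ) < 1 - t) (by ring)
  simpa [smul_eq_mul] using this
end

section
/- The Lax curve φ_l is strictly decreasing on (0,∞): for all 0 < h₁ < h₂ one has φ_l(h₁) > φ_l(h₂). -/
lemma shock_term_pos (g hl b : ℝ) (hg : 0 < g) (hhl : 0 < hl) (hb : hl < b) :
    0 < (b - hl) * Real.sqrt (g * (b + hl) / (2 * b * hl)) := by
  have hb0 : 0 < b := hhl.trans hb
  apply mul_pos (by linarith)
  apply Real.sqrt_pos.2
  positivity

lemma shock_mono (g hl a b : ℝ) (hg : 0 < g) (hhl : 0 < hl) (ha : hl < a) (hab : a < b) :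
    (a - hl) * Real.sqrt (g * (a + hl) / (2 * a * hl))
      < (b - hl) * Real.sqrt (g * (b + hl) / (2 * b * hl)) := by
  have ha0 : 0 < a := hhl.trans ha
  have hb0 : 0 < b := ha0.trans hab
  have h1 : (a - hl) * Real.sqrt (g * (a + hl) / (2 * a * hl))
      = Real.sqrt ((a - hl) ^ 2 * (g * (a + hl)) / (2 * a * hl)) := by
    rw [show (a - hl) ^ 2 * (g * (a + hl)) / (2 * a * hl)
        = (a - hl) ^ 2 * (g * (a + hl) / (2 * a * hl)) by ring,
      Real.sqrt_mul (sq_nonneg _), Real.sqrt_sq (by linarith : (0:ℝ) ≤ a - hl)]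
  have h2 : (b - hl) * Real.sqrt (g * (b + hl) / (2 * b * hl))
      = Real.sqrt ((b - hl) ^ 2 * (g * (b + hl)) / (2 * b * hl)) := by
    rw [show (b - hl) ^ 2 * (g * (b + hl)) / (2 * b * hl)
        = (b - hl) ^ 2 * (g * (b + hl) / (2 * b * hl)) by ring,
      Real.sqrt_mul (sq_nonneg _), Real.sqrt_sq (by linarith : (0:ℝ) ≤ b - hl)]
  rw [h1, h2]
  apply Real.sqrt_lt_sqrt (by positivity)
  rw [div_lt_div_iff₀ (by positivity) (by positivity)]
  have q1 : hl ^ 2 < a * b := by nlinarith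
  have q2 : (0:ℝ) < a + b - hl := by linarith
  have q3 := mul_pos (sub_pos.2 q1) q2
  have q4 := mul_pos (mul_pos hhl hhl) (show (0:ℝ) < a + b - 2 * hl by linarith)
  have p1 : 0 < a * b * (a + b - hl) - hl ^ 3 := by nlinarith
  have p2 : 0 < 2 * hl * g * (b - a) := by
    have : (0:ℝ) < b - a := by linarith
    positivity
  nlinarith [mul_pos p2 p1]

/-- The Lax curve `φ_l` is strictly decreasing on `(0, ∞)`. -/
theorem phil_strictAnti (g hl vl : ℝ) (hg : 0 < g) (hhl : 0 < hl) :
    ∀ h₁ h₂ : ℝ, 0 < h₁ → h₁ < h₂ → phil g hl vl h₁ > phil g hl vl h₂ := by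
  intro a b ha0 hab
  have hb0 : 0 < b := ha0.trans hab
  unfold phil
  by_cases hbl : b ≤ hl
  · have hal : a ≤ hl := le_of_lt (hab.trans_le hbl)
    rw [if_pos hal, if_pos hbl]
    have : Real.sqrt (g * a) < Real.sqrt (g * b) :=
      Real.sqrt_lt_sqrt (by positivity) (by nlinarith)
    linarith
  · push_neg at hbl
    rw [if_neg (not_le.2 hbl)]
    by_cases hal : a ≤ hl
    · rw [if_pos hal]
      have h1 : Real.sqrt (g * a) ≤ Real.sqrt (g * hl) :=
        Real.sqrt_le_sqrt (by nlinarith)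
      have h2 := shock_term_pos g hl b hg hhl hbl
      linarith
    · push_neg at hal
      rw [if_neg (not_le.2 hal)]
      have := shock_mono g hl a b hg hhl hal hab
      linarith
end

section
/- If v_l ≤ −2√(g h_l), then the discharge-form Lax curve lies strictly below the lower critical curve: φ̃_l(h) < −h·√(g h) for every h > 0 (in particular φ̃_l is strictly negative and never meets the critical curves C̃⁺ and C̃⁻). -/
/-- If `v_l ≤ −2√(g h_l)`, the discharge-form Lax curve lies strictly below the
lower critical curve `C̃⁻(h) = −h√(g h)` for every `h > 0`. -/
theorem philTilde_below_lower_critical (g hl vl : ℝ) (hg : 0 < g) (hhl : 0 < hl)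
    (hvl : vl ≤ -2 * Real.sqrt (g * hl)) :
    ∀ h : ℝ, 0 < h → philTilde g hl vl h < -(h * Real.sqrt (g * h)) := by
  intro h hh
  set a := Real.sqrt (g * h) with ha
  set b := Real.sqrt (g * hl) with hb
  have ha2 : a ^ 2 = g * h := Real.sq_sqrt (by positivity)
  have hb2 : b ^ 2 = g * hl := Real.sq_sqrt (by positivity)
  have hapos : 0 < a := Real.sqrt_pos.mpr (by positivity)
  have hbpos : 0 < b := Real.sqrt_pos.mpr (by positivity)
  unfold philTilde phil
  split_ifs with hle
  · nlinarith [mul_pos hh hapos, mul_pos hh hbpos]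
  · push_neg at hle
    set s := Real.sqrt (g * (h + hl) / (2 * h * hl)) with hs
    have hs2 : s ^ 2 * (2 * h * hl) = g * (h + hl) := by
      rw [hs, Real.sq_sqrt (by positivity)]
      field_simp
    have hspos : 0 < s := Real.sqrt_pos.mpr (by positivity)
    have hcnn : 0 ≤ 2 * b + (h - hl) * s := by
      have := sub_pos.mpr hle
      positivity
    have key2 : g * h * (2 * h * hl) <
        4 * (g * hl) * (2 * h * hl) + (h - hl) ^ 2 * (g * (h + hl)) := by
      nlinarith [mul_nonneg (mul_nonneg hg.le hh.le) (sq_nonneg (2 * h - 3 * hl)),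
        mul_pos (mul_pos hg hh) (mul_pos hhl hhl),
        mul_pos (mul_pos hg hhl) (mul_pos hhl hhl)]
    have hsq : a ^ 2 < (2 * b + (h - hl) * s) ^ 2 := by
      nlinarith [key2, hs2, mul_pos hh hhl,
        mul_nonneg (mul_nonneg hbpos.le (sub_pos.mpr hle).le) hspos.le]
    have key : a < 2 * b + (h - hl) * s := lt_of_pow_lt_pow_left₀ 2 hcnn hsq
    nlinarith [mul_pos hh hspos, mul_pos hh hbpos, sub_pos.mpr hle]
end

section
/- If −2√(g h_l) < v_l ≤ √(g h_l), then the point h⁺ := (v_l + 2√(g h_l))²/(9g) satisfies 0 < h⁺ ≤ h_l, the value of the discharge-form Lax curve there lies on the upper critical curve, φ̃_l(h⁺) = h⁺·√(g h⁺), and h⁺ is the unique global maximum point of φ̃_l on (0,∞): φ̃_l(h) < φ̃_l(h⁺) for every h > 0 with h ≠ h⁺. -/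
lemma cubic_key (s x : ℝ) (hs : 0 < s) (hx : 0 < x) (hne : x ≠ s / 3) :
    s * x ^ 2 - 2 * x ^ 3 < s ^ 3 / 27 := by
  have hne' : x - s / 3 ≠ 0 := sub_ne_zero.mpr hne
  have h1 : 0 < (x - s / 3) ^ 2 := by positivity
  have h2 : 0 < 2 * x + s / 3 := by linarith
  nlinarith [mul_pos h1 h2]

/-- If `−2√(g h_l) < v_l ≤ √(g h_l)`, then `h⁺ = (v_l + 2√(g h_l))²/(9g)`
lies in `(0, h_l]`, the discharge-form Lax curve meets the upper critical curve
there, and `h⁺` is the unique global maximum point of `φ̃_l` on `(0, ∞)`. -/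
theorem philTilde_max_at_critical (g hl vl : ℝ) (hg : 0 < g) (hhl : 0 < hl)
    (hv₁ : -2 * Real.sqrt (g * hl) < vl) (hv₂ : vl ≤ Real.sqrt (g * hl)) :
    0 < (vl + 2 * Real.sqrt (g * hl)) ^ 2 / (9 * g) ∧
    (vl + 2 * Real.sqrt (g * hl)) ^ 2 / (9 * g) ≤ hl ∧
    philTilde g hl vl ((vl + 2 * Real.sqrt (g * hl)) ^ 2 / (9 * g)) =
      ((vl + 2 * Real.sqrt (g * hl)) ^ 2 / (9 * g)) *
        Real.sqrt (g * ((vl + 2 * Real.sqrt (g * hl)) ^ 2 / (9 * g))) ∧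
    ∀ h : ℝ, 0 < h → h ≠ (vl + 2 * Real.sqrt (g * hl)) ^ 2 / (9 * g) →
      philTilde g hl vl h <
        philTilde g hl vl ((vl + 2 * Real.sqrt (g * hl)) ^ 2 / (9 * g)) := by
  set c := Real.sqrt (g * hl) with hcdef
  have hc0 : 0 < c := Real.sqrt_pos.mpr (by positivity)
  have hc2 : c ^ 2 = g * hl := Real.sq_sqrt (by positivity)
  set s := vl + 2 * c with hsdef
  have hs0 : 0 < s := by simp only [hsdef]; linarith
  have hs3 : s ≤ 3 * c := by simp only [hsdef]; linarith
  set hp := s ^ 2 / (9 * g) with hpdef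
  have hp0 : 0 < hp := by positivity
  have hgp : g * hp = (s / 3) ^ 2 := by
    rw [hpdef, mul_div_assoc', div_eq_iff (by positivity)]; ring
  have hple : hp ≤ hl := by
    rw [hpdef, div_le_iff₀ (by positivity)]
    nlinarith
  have hsqp : Real.sqrt (g * hp) = s / 3 := by
    rw [hgp, Real.sqrt_sq (by positivity)]
  -- value at hp
  have hval : philTilde g hl vl hp = hp * (s / 3) := by
    rw [philTilde, phil, if_pos hple, hsqp]
    rw [← hcdef, hsdef]
    ring_nf
  refine ⟨hp0, hple, ?_, ?_⟩
  · rw [hval, hsqp]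
  · intro h hh hne
    set x := Real.sqrt (g * h) with hxdef
    have hx0 : 0 < x := Real.sqrt_pos.mpr (by positivity)
    have hx2 : x ^ 2 = g * h := Real.sq_sqrt (by positivity)
    have hxne : x ≠ s / 3 := by
      intro hxe
      apply hne
      have : g * h = g * hp := by rw [← hx2, hxe, hgp]
      exact mul_left_cancel₀ (ne_of_gt hg) this
    have key : s * x ^ 2 - 2 * x ^ 3 < s ^ 3 / 27 := cubic_key s x hs0 hx0 hxne
    -- rarefaction comparison: h * (s - 2x) < hp * (s/3)
    have rar : h * (s - 2 * x) < hp * (s / 3) := by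
      have e1 : g * (h * (s - 2 * x)) = s * x ^ 2 - 2 * x ^ 3 := by
        linear_combination (2 * x - s) * hx2
      have e2 : g * (hp * (s / 3)) = s ^ 3 / 27 := by
        rw [hpdef]; field_simp; ring
      have : g * (h * (s - 2 * x)) < g * (hp * (s / 3)) := by
        rw [e1, e2]; exact key
      exact lt_of_mul_lt_mul_left this hg.le
    rw [hval]
    by_cases hcase : h ≤ hl
    · rw [philTilde, phil, if_pos hcase]
      have e : h * (vl + 2 * Real.sqrt (g * hl) - 2 * Real.sqrt (g * h))
          = h * (s - 2 * x) := by rw [hsdef, hcdef, hxdef]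
      rw [e]; exact rar
    · push_neg at hcase
      rw [philTilde, phil, if_neg (not_le.mpr hcase)]
      set q := Real.sqrt (g * (h + hl) / (2 * h * hl)) with hqdef
      have hq0 : 0 ≤ q := Real.sqrt_nonneg _
      have hq2 : q ^ 2 = g * (h + hl) / (2 * h * hl) :=
        Real.sq_sqrt (by positivity)
      have hq2' : q ^ 2 * (2 * h * hl) = g * h + g * hl := by
        rw [hq2]; field_simp
      have hxc : c < x := by
        rw [hxdef, hcdef]
        exact Real.sqrt_lt_sqrt (by positivity) (by nlinarith)
      -- squared inequality
      have hfac : 0 ≤ (x ^ 2 - c ^ 2) ^ 2 * (x ^ 2 + c ^ 2)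
          - 8 * x ^ 2 * c ^ 2 * (x - c) ^ 2 := by
        have : (x ^ 2 - c ^ 2) ^ 2 * (x ^ 2 + c ^ 2)
            - 8 * x ^ 2 * c ^ 2 * (x - c) ^ 2
            = (x - c) ^ 4 * (x ^ 2 + 4 * x * c + c ^ 2) := by ring
        rw [this]; positivity
      have hP : (0:ℝ) < 2 * h * hl * g ^ 2 := by positivity
      have E1 : (2 * x - 2 * c) ^ 2 * (2 * h * hl * g ^ 2)
          = 8 * x ^ 2 * c ^ 2 * (x - c) ^ 2 := by
        linear_combination (-8 * (x - c) ^ 2 * g * hl) * hx2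
          + (-8 * (x - c) ^ 2 * x ^ 2) * hc2
      have E2 : ((h - hl) * q) ^ 2 * (2 * h * hl * g ^ 2)
          = (x ^ 2 - c ^ 2) ^ 2 * (x ^ 2 + c ^ 2) := by
        have exc : x ^ 2 - c ^ 2 = g * (h - hl) := by rw [hx2, hc2]; ring
        have epl : x ^ 2 + c ^ 2 = g * h + g * hl := by rw [hx2, hc2]
        rw [exc, epl]
        linear_combination (g ^ 2 * (h - hl) ^ 2) * hq2'
      have hsq : (2 * x - 2 * c) ^ 2 ≤ ((h - hl) * q) ^ 2 := by
        have := hfac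
        have h1 : (2 * x - 2 * c) ^ 2 * (2 * h * hl * g ^ 2)
            ≤ ((h - hl) * q) ^ 2 * (2 * h * hl * g ^ 2) := by
          rw [E1, E2]; linarith
        exact le_of_mul_le_mul_right h1 hP
      have hA : 0 ≤ 2 * x - 2 * c := by linarith
      have hB : 0 ≤ (h - hl) * q := mul_nonneg (by linarith) hq0
      have hAB : 2 * x - 2 * c ≤ (h - hl) * q := by
        have := Real.sqrt_le_sqrt hsq
        rwa [Real.sqrt_sq hA, Real.sqrt_sq hB] at this
      have shock_le : h * (vl - (h - hl) * q) ≤ h * (s - 2 * x) := by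
        apply mul_le_mul_of_nonneg_left _ hh.le
        rw [hsdef]; linarith
      calc h * (vl - (h - hl) * q) ≤ h * (s - 2 * x) := shock_le
        _ < hp * (s / 3) := rar
end

section
/- If −2√(g h_l) < v_l ≤ 0, then the discharge-form Lax curve φ̃_l has exactly one zero in (0,∞), namely h = (v_l + 2√(g h_l))²/(4g); i.e., for h > 0 one has φ̃_l(h) = 0 if and only if h = (v_l + 2√(g h_l))²/(4g). -/
/-- If `−2√(g h_l) < v_l ≤ 0`, the discharge-form Lax curve has exactly one zero
in `(0, ∞)`, namely `h = (v_l + 2√(g h_l))²/(4g)`. -/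
theorem philTilde_unique_zero (g hl vl : ℝ) (hg : 0 < g) (hhl : 0 < hl)
    (hv₁ : -2 * Real.sqrt (g * hl) < vl) (hv₂ : vl ≤ 0) :
    ∀ h : ℝ, 0 < h →
      (philTilde g hl vl h = 0 ↔ h = (vl + 2 * Real.sqrt (g * hl)) ^ 2 / (4 * g)) := by
  intro h hh
  set s := Real.sqrt (g * hl) with hsdef
  have hs0 : 0 < s := Real.sqrt_pos.mpr (by positivity)
  have hs2 : s ^ 2 = g * hl := Real.sq_sqrt (by positivity)
  have hvs : 0 < vl + 2 * s := by linarith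
  have hstar_le : (vl + 2 * s) ^ 2 / (4 * g) ≤ hl := by
    rw [div_le_iff₀ (by positivity)]
    nlinarith [mul_nonneg (neg_nonneg.mpr hv₂) (by linarith : (0:ℝ) ≤ vl + 4 * s)]
  by_cases hc : h ≤ hl
  · unfold philTilde phil
    rw [if_pos hc]
    have ht0 : 0 ≤ Real.sqrt (g * h) := Real.sqrt_nonneg _
    have ht2 : Real.sqrt (g * h) ^ 2 = g * h := Real.sq_sqrt (by positivity)
    constructor
    · intro heq
      have h2 : vl + 2 * s - 2 * Real.sqrt (g * h) = 0 := by
        rcases mul_eq_zero.mp heq with h' | h'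
        · exact absurd h' (ne_of_gt hh)
        · exact h'
      have hsq : (vl + 2 * s) ^ 2 = 4 * (g * h) := by nlinarith
      rw [eq_div_iff (by positivity)]
      linarith
    · intro heq
      have : Real.sqrt (g * h) = (vl + 2 * s) / 2 := by
        rw [heq, show g * ((vl + 2 * s) ^ 2 / (4 * g)) = ((vl + 2 * s) / 2) ^ 2 by
          field_simp; ring]
        exact Real.sqrt_sq (by linarith)
      rw [this]; ring
  · push_neg at hc
    have hne : h ≠ (vl + 2 * s) ^ 2 / (4 * g) := by
      intro he; rw [he] at hc; linarith
    have hlt : philTilde g hl vl h < 0 := by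
      unfold philTilde phil
      rw [if_neg (not_le.mpr hc)]
      have hA : 0 < Real.sqrt (g * (h + hl) / (2 * h * hl)) :=
        Real.sqrt_pos.mpr (by positivity)
      have hpos : 0 < (h - hl) * Real.sqrt (g * (h + hl) / (2 * h * hl)) :=
        mul_pos (by linarith) hA
      exact mul_neg_of_pos_of_neg hh (by linarith)
    constructor
    · intro he; exact absurd he (ne_of_lt hlt)
    · intro he; exact absurd he hne
end

section
/- If −2√(g h_l) < v_l ≤ −√(g h_l), then the point h⁻ := (v_l + 2√(g h_l))²/g satisfies 0 < h⁻ ≤ h_l and the rarefaction part of the Lax curve meets the lower critical curve there: φ_l(h⁻) = v_l + 2√(g h_l) − 2√(g h⁻) = −√(g h⁻). -/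
/-- If `−2√(g h_l) < v_l ≤ −√(g h_l)`, then `h⁻ = (v_l + 2√(g h_l))²/g` lies in
`(0, h_l]` and the rarefaction part of the Lax curve meets the lower critical
curve there. -/
theorem phil_rarefaction_meets_lower_critical (g hl vl : ℝ) (hg : 0 < g) (hhl : 0 < hl)
    (hv₁ : -2 * Real.sqrt (g * hl) < vl) (hv₂ : vl ≤ -Real.sqrt (g * hl)) :
    0 < (vl + 2 * Real.sqrt (g * hl)) ^ 2 / g ∧
    (vl + 2 * Real.sqrt (g * hl)) ^ 2 / g ≤ hl ∧
    phil g hl vl ((vl + 2 * Real.sqrt (g * hl)) ^ 2 / g) =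
      vl + 2 * Real.sqrt (g * hl) -
        2 * Real.sqrt (g * ((vl + 2 * Real.sqrt (g * hl)) ^ 2 / g)) ∧
    vl + 2 * Real.sqrt (g * hl) -
        2 * Real.sqrt (g * ((vl + 2 * Real.sqrt (g * hl)) ^ 2 / g)) =
      -Real.sqrt (g * ((vl + 2 * Real.sqrt (g * hl)) ^ 2 / g)) := by
  set s := Real.sqrt (g * hl) with hs
  have hspos : 0 < s := Real.sqrt_pos.mpr (by positivity)
  have ha : 0 < vl + 2 * s := by linarith
  have hale : vl + 2 * s ≤ s := by linarith
  have hsq : g * ((vl + 2 * s) ^ 2 / g) = (vl + 2 * s) ^ 2 := by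
    field_simp
  have hroot : Real.sqrt (g * ((vl + 2 * s) ^ 2 / g)) = vl + 2 * s := by
    rw [hsq, Real.sqrt_sq ha.le]
  have hle : (vl + 2 * s) ^ 2 / g ≤ hl := by
    rw [div_le_iff₀ hg]
    have hs2 : s ^ 2 = g * hl := Real.sq_sqrt (by positivity)
    nlinarith [sq_nonneg (vl + 2 * s)]
  refine ⟨by positivity, hle, ?_, ?_⟩
  · rw [phil, if_pos hle]
  · rw [hroot]; ring
end

section
/- If −√(g h_l) < v_l ≤ √(g h_l), then the shock part of the Lax curve meets the lower critical curve: there exists h ≥ h_l such that v_l − (h − h_l)·√(g (h + h_l)/(2 h h_l)) + √(g h) = 0. -/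
/-- If `−√(g h_l) < v_l ≤ √(g h_l)`, the shock part of the Lax curve meets the
lower critical curve `C⁻(h) = −√(g h)`: there is `h ≥ h_l` with
`S₁(h_l, v_l; h) + √(g h) = 0`. -/
theorem shock_meets_lower_critical (g hl vl : ℝ) (hg : 0 < g) (hhl : 0 < hl)
    (hv₁ : -Real.sqrt (g * hl) < vl) (hv₂ : vl ≤ Real.sqrt (g * hl)) :
    ∃ h : ℝ, h ≥ hl ∧
      vl - (h - hl) * Real.sqrt (g * (h + hl) / (2 * h * hl)) + Real.sqrt (g * h) = 0 := by
  set f : ℝ → ℝ := fun h =>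
    vl - (h - hl) * Real.sqrt (g * (h + hl) / (2 * h * hl)) + Real.sqrt (g * h) with hf
  have hle : hl ≤ 19 * hl := by nlinarith
  have hcont : ContinuousOn f (Set.Icc hl (19 * hl)) := by
    apply ContinuousOn.add
    · apply ContinuousOn.sub continuousOn_const
      apply ContinuousOn.mul (by fun_prop)
      apply Real.continuous_sqrt.comp_continuousOn
      apply ContinuousOn.div (by fun_prop) (by fun_prop)
      intro x hx
      have hx0 : 0 < x := lt_of_lt_of_le hhl hx.1
      positivity
    · fun_prop
  -- value at hl
  have hfl : 0 ≤ f hl := by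
    simp only [hf, sub_self, zero_mul, sub_zero]
    linarith
  -- value at 19*hl
  have hfr : f (19 * hl) ≤ 0 := by
    simp only [hf]
    set s1 := Real.sqrt (g * (19 * hl + hl) / (2 * (19 * hl) * hl)) with hs1
    set s2 := Real.sqrt (g * (19 * hl)) with hs2
    set s0 := Real.sqrt (g * hl) with hs0
    have h1 : s1 ^ 2 = g * (19 * hl + hl) / (2 * (19 * hl) * hl) := by
      rw [hs1, Real.sq_sqrt (by positivity)]
    have h1' : s1 ^ 2 * (38 * hl ^ 2) = 20 * (g * hl) := by
      field_simp at h1 ⊢; nlinarith [h1]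
    have h2 : s2 ^ 2 = 19 * (g * hl) := by
      rw [hs2, Real.sq_sqrt (by positivity)]; ring
    have h0 : s0 ^ 2 = g * hl := by
      rw [hs0, Real.sq_sqrt (by positivity)]
    have hs1n : 0 ≤ s1 := Real.sqrt_nonneg _
    have hs2n : 0 ≤ s2 := Real.sqrt_nonneg _
    have hs0n : 0 ≤ s0 := Real.sqrt_nonneg _
    have hghl : 0 < g * hl := by positivity
    -- suffices: s0 + s2 ≤ 18 * hl * s1
    have key : s0 + s2 ≤ 18 * hl * s1 := by
      nlinarith [sq_nonneg (s0 - s2), sq_nonneg (18 * hl * s1 - s0 - s2),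
        sq_nonneg (18 * hl * s1 + s0 + s2), mul_pos hhl hghl,
        mul_nonneg (mul_nonneg hs0n hs2n) hs1n]
    linarith [hv₂]
  have hmem : (0 : ℝ) ∈ Set.Icc (f (19 * hl)) (f hl) := ⟨hfr, hfl⟩
  have := intermediate_value_Icc' hle hcont hmem
  obtain ⟨h, hh, hfh⟩ := this
  exact ⟨h, hh.1, hfh⟩
end

section
/- Assume v_l ≥ √(g h_l), let F_l = v_l/√(g h_l) and h* = (h_l/2)(−1 + √(1 + 8 F_l²)). Then for h ≥ h_l, the equation h·(v_l − (h − h_l)·√(g (h + h_l)/(2 h h_l))) = h_l·v_l holds if and only if h = h_l or h = h*. -/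
set_option maxHeartbeats 1000000


/-- For a supercritical-or-critical left state, the horizontal line `q = q_l`
meets the shock part of the discharge-form Lax curve exactly at `h = h_l` and
`h = h* = (h_l/2)(−1 + √(1 + 8 F_l²))`. -/
theorem shock_discharge_level_set (g hl vl : ℝ) (hg : 0 < g) (hhl : 0 < hl)
    (hvl : vl ≥ Real.sqrt (g * hl)) :
    ∀ h : ℝ, h ≥ hl →
      (h * (vl - (h - hl) * Real.sqrt (g * (h + hl) / (2 * h * hl))) = hl * vl ↔
        h = hl ∨
        h = hl / 2 * (-1 + Real.sqrt (1 + 8 * (vl / Real.sqrt (g * hl)) ^ 2))) := by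
  intro h hh
  have hgl : 0 < g * hl := mul_pos hg hhl
  have hs : 0 < Real.sqrt (g * hl) := Real.sqrt_pos.mpr hgl
  have hvl0 : 0 < vl := lt_of_lt_of_le hs hvl
  have hsq : Real.sqrt (g * hl) ^ 2 = g * hl := Real.sq_sqrt hgl.le
  have hh0 : 0 < h := lt_of_lt_of_le hhl hh
  have hA : 1 + 8 * (vl / Real.sqrt (g * hl)) ^ 2 = 1 + 8 * vl ^ 2 / (g * hl) := by
    rw [div_pow, hsq]; ring
  set D := Real.sqrt (1 + 8 * (vl / Real.sqrt (g * hl)) ^ 2) with hD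
  have hDsq : D ^ 2 * (g * hl) = g * hl + 8 * vl ^ 2 := by
    have h1 : D ^ 2 = 1 + 8 * vl ^ 2 / (g * hl) := by
      rw [hD, Real.sq_sqrt, hA]
      rw [hA]; positivity
    rw [h1]; field_simp
  have hvl2 : g * hl ≤ vl ^ 2 := by nlinarith [hsq]
  have hD0 : 0 ≤ D := Real.sqrt_nonneg _
  have hD9 : (9:ℝ) ≤ D ^ 2 := by
    have : (9:ℝ) * (g * hl) ≤ D ^ 2 * (g * hl) := by linarith
    exact le_of_mul_le_mul_right this hgl
  have hD3 : 3 ≤ D := by nlinarith [hD9, hD0]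
  set hst := hl / 2 * (-1 + D) with hst_def
  have hst_pos : 0 < hst := by rw [hst_def]; nlinarith
  have keyid : g * hst ^ 2 + g * hl * hst = 2 * hl * vl ^ 2 := by
    rw [hst_def]; linear_combination (hl / 4) * hDsq
  set S := Real.sqrt (g * (h + hl) / (2 * h * hl)) with hS
  have hS0 : 0 ≤ S := Real.sqrt_nonneg _
  have hS2 : S ^ 2 = g * (h + hl) / (2 * h * hl) := by
    rw [hS, Real.sq_sqrt]; positivity
  constructor
  · intro heq
    by_cases hcase : h = hl
    · exact Or.inl hcase
    · right
      have hlt : hl < h := lt_of_le_of_ne hh (Ne.symm hcase)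
      have hv : vl = h * S := by
        have h1 : (h - hl) * vl = (h - hl) * (h * S) := by linear_combination heq
        have h2 : h - hl ≠ 0 := sub_ne_zero.mpr hcase
        exact mul_left_cancel₀ h2 h1
      have hq : g * h ^ 2 + g * hl * h = 2 * hl * vl ^ 2 := by
        have h3 : vl ^ 2 = h ^ 2 * (g * (h + hl) / (2 * h * hl)) := by
          rw [hv, ← hS2]; ring
        field_simp at h3
        nlinarith [h3]
      have hfac : (h - hst) * (g * (h + hst) + g * hl) = 0 := by
        linear_combination hq - keyid
      rcases mul_eq_zero.mp hfac with h4 | h4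
      · linarith [sub_eq_zero.mp h4]
      · nlinarith [mul_pos hg hh0, mul_pos hg hst_pos, mul_pos hg hhl]
  · rintro (rfl | rfl)
    · simp
    · have hveq : vl = hst * S := by
        have hne : (2:ℝ) * hst * hl ≠ 0 := by positivity
        have hsq2 : vl ^ 2 = (hst * S) ^ 2 := by
          rw [mul_pow, hS2, mul_div_assoc', eq_div_iff hne]
          linear_combination (-hst) * keyid
        have h0 : (vl - hst * S) * (vl + hst * S) = 0 := by linear_combination hsq2
        rcases mul_eq_zero.mp h0 with h4 | h4
        · linarith [sub_eq_zero.mp h4]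
        · nlinarith [mul_nonneg hst_pos.le hS0]
      linear_combination (hst - hl) * hveq
end

section
/- Assume v_l > √(g h_l) (supercritical left state), let F_l = v_l/√(g h_l), q_l = h_l·v_l and h* = (h_l/2)(−1 + √(1 + 8 F_l²)). Then h* > (q_l²/g)^{1/3}; equivalently 0 < q_l < h*·√(g h*), so the state (h*, q_l) is subcritical (its Froude number q_l/(h*√(g h*)) lies strictly between 0 and 1). -/
/-- For a supercritical left state `(h_l, v_l)` (`v_l > √(g h_l)`), the state
`(h*, q_l)` with `h* = (h_l/2)(−1 + √(1 + 8 F_l²))` and `q_l = h_l v_l` is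
subcritical: `h* > (q_l²/g)^{1/3}`, equivalently `0 < q_l < h*·√(g h*)`, i.e.
its Froude number lies strictly between `0` and `1`. -/
theorem hstar_subcritical (g hl vl : ℝ) (hg : 0 < g) (hhl : 0 < hl)
    (hvl : vl > Real.sqrt (g * hl)) :
    hl / 2 * (-1 + Real.sqrt (1 + 8 * (vl / Real.sqrt (g * hl)) ^ 2)) >
      ((hl * vl) ^ 2 / g) ^ ((1 : ℝ) / 3) ∧
    0 < hl * vl /
        (hl / 2 * (-1 + Real.sqrt (1 + 8 * (vl / Real.sqrt (g * hl)) ^ 2)) *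
          Real.sqrt (g * (hl / 2 * (-1 + Real.sqrt (1 + 8 * (vl / Real.sqrt (g * hl)) ^ 2))))) ∧
    hl * vl /
        (hl / 2 * (-1 + Real.sqrt (1 + 8 * (vl / Real.sqrt (g * hl)) ^ 2)) *
          Real.sqrt (g * (hl / 2 * (-1 + Real.sqrt (1 + 8 * (vl / Real.sqrt (g * hl)) ^ 2))))) <
      1 := by
  have hghl : 0 < g * hl := by positivity
  set A := Real.sqrt (g * hl) with hAdef
  have hApos : 0 < A := Real.sqrt_pos.2 hghl
  have hA2 : A ^ 2 = g * hl := Real.sq_sqrt hghl.le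
  have hvpos : 0 < vl := hApos.trans hvl
  have hv2 : g * hl < vl ^ 2 := by nlinarith
  have hF2 : (vl / A) ^ 2 = vl ^ 2 / (g * hl) := by rw [div_pow, hA2]
  set T := 1 + 8 * (vl / A) ^ 2 with hTdef
  have hTeq : T * (g * hl) = g * hl + 8 * vl ^ 2 := by
    rw [hTdef, hF2]; field_simp
  have hT9 : 9 < T := by
    have h1 : 1 < vl ^ 2 / (g * hl) := (one_lt_div hghl).2 hv2
    rw [hTdef, hF2]; linarith
  set r := Real.sqrt T with hrdef
  have hr2 : r ^ 2 = T := Real.sq_sqrt (by linarith)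
  have hr3 : 3 < r := by
    have := Real.lt_sqrt (by norm_num : (0:ℝ) ≤ 3) (y := T)
    rw [← hrdef] at this
    exact this.2 (by norm_num [hT9])
  set H := hl / 2 * (-1 + r) with hHdef
  have hHpos : 0 < H := by
    rw [hHdef]; nlinarith
  -- key cubic inequality
  have hkey : (hl * vl) ^ 2 / g < H ^ 3 := by
    rw [div_lt_iff₀ hg, hHdef]
    -- (r-1)^3 > r^2 - 1 since r > 3
    have h1 : (r - 1) * (r + 1) < (r - 1) ^ 3 := by nlinarith
    -- (r^2 - 1) * (g*hl) = 8 * vl^2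
    have h2 : (r ^ 2 - 1) * (g * hl) = 8 * vl ^ 2 := by
      rw [hr2]; linarith [hTeq]
    have h3 : 8 * vl ^ 2 < (r - 1) ^ 3 * (g * hl) := by
      nlinarith [mul_lt_mul_of_pos_right h1 hghl]
    nlinarith [mul_lt_mul_of_pos_left h3 (by positivity : (0:ℝ) < hl ^ 2)]
  set C := ((hl * vl) ^ 2 / g) ^ ((1 : ℝ) / 3) with hCdef
  have hCnonneg : 0 ≤ C := Real.rpow_nonneg (by positivity) _
  have hC3 : C ^ 3 = (hl * vl) ^ 2 / g := by
    rw [hCdef, ← Real.rpow_natCast (((hl * vl) ^ 2 / g) ^ ((1:ℝ)/3)) 3,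
      ← Real.rpow_mul (by positivity)]
    norm_num
  have hCH : C < H := by
    by_contra hle
    push_neg at hle
    have : H ^ 3 ≤ C ^ 3 := pow_le_pow_left₀ hHpos.le hle 3
    rw [hC3] at this
    linarith
  have hq2 : (hl * vl) ^ 2 < g * H ^ 3 := by
    rw [← div_lt_iff₀' hg]; exact hkey
  have hsq : 0 < Real.sqrt (g * H) := Real.sqrt_pos.2 (by positivity)
  have hlt : hl * vl < H * Real.sqrt (g * H) := by
    apply lt_of_pow_lt_pow_left₀ 2 (by positivity)
    have : (H * Real.sqrt (g * H)) ^ 2 = g * H ^ 3 := by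
      rw [mul_pow, Real.sq_sqrt (by positivity : (0:ℝ) ≤ g * H)]; ring
    rw [this]; exact hq2
  refine ⟨hCH, ?_, ?_⟩
  · positivity
  · rw [div_lt_one (by positivity)]; exact hlt
end

section
/- If −√(g h_r) < v_r < √(g h_r), then the shock part of the inverse Lax curve meets the upper critical curve: there exists h ≥ h_r such that v_r + (h − h_r)·√(g (h + h_r)/(2 h h_r)) = √(g h). -/
/-- If `−√(g h_r) < v_r < √(g h_r)`, the shock part of the inverse Lax curve meets
the upper critical curve `C⁺(h) = √(g h)`: there is `h ≥ h_r` with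
`S₂⁻¹(h_r, v_r; h) = √(g h)`. -/
theorem inverse_shock_meets_upper_critical (g hr vr : ℝ) (hg : 0 < g) (hhr : 0 < hr)
    (hv₁ : -Real.sqrt (g * hr) < vr) (hv₂ : vr < Real.sqrt (g * hr)) :
    ∃ h : ℝ, h ≥ hr ∧
      vr + (h - hr) * Real.sqrt (g * (h + hr) / (2 * h * hr)) = Real.sqrt (g * h) := by
  set F : ℝ → ℝ := fun h => vr + (h - hr) * Real.sqrt (g * (h + hr) / (2 * h * hr)) -
    Real.sqrt (g * h) with hFdef
  have hcont : ContinuousOn F (Set.Icc hr (9 * hr)) := by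
    apply ContinuousOn.sub
    · apply ContinuousOn.add continuousOn_const
      apply ContinuousOn.mul (by fun_prop)
      apply ContinuousOn.sqrt
      apply ContinuousOn.div (by fun_prop) (by fun_prop)
      intro x hx
      have hx0 : 0 < x := lt_of_lt_of_le hhr hx.1
      positivity
    · fun_prop
  have hFhr : F hr < 0 := by
    simp only [hFdef, sub_self, zero_mul, add_zero]
    linarith
  have hsq9 : Real.sqrt (g * (9 * hr)) = 3 * Real.sqrt (g * hr) := by
    rw [show g * (9 * hr) = 9 * (g * hr) by ring,
      Real.sqrt_mul (by norm_num) (g * hr),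
      show (9:ℝ) = 3 ^ 2 by norm_num, Real.sqrt_sq (by norm_num)]
  have hF9 : 0 < F (9 * hr) := by
    have hX : g * (9 * hr + hr) / (2 * (9 * hr) * hr) = 5 * g / (9 * hr) := by
      field_simp
      ring
    have hmid : (9 * hr - hr) * Real.sqrt (g * (9 * hr + hr) / (2 * (9 * hr) * hr))
        = Real.sqrt (320 / 9 * (g * hr)) := by
      rw [hX, show (9 * hr - hr) = Real.sqrt ((8 * hr) ^ 2) by
        rw [Real.sqrt_sq (by positivity)]; ring,
        ← Real.sqrt_mul (by positivity)]
      congr 1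
      field_simp
      ring
    have hge : Real.sqrt (16 * (g * hr)) ≤ Real.sqrt (320 / 9 * (g * hr)) := by
      apply Real.sqrt_le_sqrt
      nlinarith [mul_pos hg hhr]
    have h16 : Real.sqrt (16 * (g * hr)) = 4 * Real.sqrt (g * hr) := by
      rw [Real.sqrt_mul (by norm_num) (g * hr),
        show (16:ℝ) = 4 ^ 2 by norm_num, Real.sqrt_sq (by norm_num)]
    simp only [hFdef]
    rw [hmid, hsq9]
    linarith [h16 ▸ hge]
  have hsub : Set.Icc (F hr) (F (9 * hr)) ⊆ F '' Set.Icc hr (9 * hr) :=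
    intermediate_value_Icc (by linarith) hcont
  obtain ⟨h, hmem, hFh⟩ := hsub ⟨le_of_lt hFhr, le_of_lt hF9⟩
  refine ⟨h, hmem.1, ?_⟩
  have : vr + (h - hr) * Real.sqrt (g * (h + hr) / (2 * h * hr)) -
      Real.sqrt (g * h) = 0 := hFh
  linarith
end

section
/- If v_l + 2√(g h_l) > v_r − 2√(g h_r), then there exists exactly one h > 0 such that φ_l(h) = φ_r(h); i.e., the Riemann problem for the shallow water equations with left state (h_l, v_l) and right state (h_r, v_r) has a unique middle state. -/
/-- Inverse Lax curve through the right state `(hr, vr)`. -/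
noncomputable def phir (g hr vr h : ℝ) : ℝ :=
  if h ≤ hr then vr - 2 * Real.sqrt (g * hr) + 2 * Real.sqrt (g * h)
  else vr + (h - hr) * Real.sqrt (g * (h + hr) / (2 * h * hr))

/-- Monotonicity of the shock term. -/
lemma shock_lt (g hl : ℝ) (hg : 0 < g) (hhl : 0 < hl) {a b : ℝ} (ha : hl ≤ a) (hab : a < b) :
    (a - hl) * Real.sqrt (g * (a + hl) / (2 * a * hl)) <
      (b - hl) * Real.sqrt (g * (b + hl) / (2 * b * hl)) := by
  have ha0 : 0 < a := hhl.trans_le ha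
  have hb0 : 0 < b := ha0.trans hab
  have key : (a - hl) ^ 2 * (g * (a + hl) / (2 * a * hl)) <
      (b - hl) ^ 2 * (g * (b + hl) / (2 * b * hl)) := by
    rw [mul_div_assoc', mul_div_assoc', div_lt_div_iff₀ (by positivity) (by positivity)]
    have h1 : 0 < b - a := sub_pos.2 hab
    have h2 : 0 < a * b * (a + b - hl) - hl ^ 3 := by
      have k1 : 0 < hl ^ 2 * (a + b - 2 * hl) := by
        apply mul_pos (by positivity); linarith
      have k2 : 0 ≤ (a * b - hl ^ 2) * (a + b - hl) :=
        mul_nonneg (by nlinarith) (by linarith)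
      nlinarith [k1, k2]
    nlinarith [mul_pos h1 h2, mul_pos hg hhl, mul_pos (mul_pos hg hhl) (mul_pos h1 h2)]
  have e1 : ∀ x : ℝ, hl ≤ x →
      (x - hl) * Real.sqrt (g * (x + hl) / (2 * x * hl)) =
        Real.sqrt ((x - hl) ^ 2 * (g * (x + hl) / (2 * x * hl))) := by
    intro x hx
    rw [Real.sqrt_mul (sq_nonneg _), Real.sqrt_sq_eq_abs, abs_of_nonneg (by linarith)]
  rw [e1 a ha, e1 b (ha.trans hab.le)]
  exact Real.sqrt_lt_sqrt (by positivity) key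

/-- `phil` is strictly decreasing on positives. -/
lemma phil_anti (g hl vl : ℝ) (hg : 0 < g) (hhl : 0 < hl) {a b : ℝ} (ha : 0 < a) (hab : a < b) :
    phil g hl vl b < phil g hl vl a := by
  unfold phil
  by_cases hb : b ≤ hl
  · have haa : a ≤ hl := hab.le.trans hb
    rw [if_pos hb, if_pos haa]
    have : Real.sqrt (g * a) < Real.sqrt (g * b) :=
      Real.sqrt_lt_sqrt (by positivity) (by nlinarith)
    linarith
  · push_neg at hb
    rw [if_neg (not_le.2 hb)]
    by_cases haa : a ≤ hl
    · rw [if_pos haa]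
      have h1 : 0 < (b - hl) * Real.sqrt (g * (b + hl) / (2 * b * hl)) :=
        mul_pos (by linarith) (Real.sqrt_pos.2 (div_pos (by nlinarith) (by nlinarith)))
      have h2 : Real.sqrt (g * a) ≤ Real.sqrt (g * hl) :=
        Real.sqrt_le_sqrt (by nlinarith)
      linarith
    · push_neg at haa
      rw [if_neg (not_le.2 haa)]
      have := shock_lt g hl hg hhl haa.le hab
      linarith

lemma phir_eq (g hr vr h : ℝ) : phir g hr vr h = - phil g hr (-vr) h := by
  unfold phil phir; split <;> ring

/-- `phil` is continuous. -/
lemma phil_cont (g hl vl : ℝ) (hhl : 0 < hl) : Continuous (phil g hl vl) := by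
  unfold phil
  apply continuous_if_le continuous_id continuous_const
  · exact (by fun_prop : Continuous fun h : ℝ =>
      vl + 2 * Real.sqrt (g * hl) - 2 * Real.sqrt (g * h)).continuousOn
  · apply ContinuousOn.sub continuousOn_const
    apply ContinuousOn.mul (by fun_prop)
    apply Real.continuous_sqrt.comp_continuousOn
    apply ContinuousOn.div (by fun_prop) (by fun_prop)
    intro x hx
    have hx' : (hl : ℝ) ≤ x := hx
    exact ne_of_gt (mul_pos (mul_pos two_pos (hhl.trans_le hx')) hhl)
  · intro x hx
    simp only [id] at hx
    subst hx
    simp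

/-- If `v_l + 2√(g h_l) > v_r − 2√(g h_r)`, the Lax curves `φ_l` and `φ_r` have a
unique intersection on `(0, ∞)`: the Riemann problem has a unique middle state. -/
theorem unique_middle_state (g hl vl hr vr : ℝ) (hg : 0 < g) (hhl : 0 < hl) (hhr : 0 < hr)
    (hcond : vl + 2 * Real.sqrt (g * hl) > vr - 2 * Real.sqrt (g * hr)) :
    ∃! h : ℝ, 0 < h ∧ phil g hl vl h = phir g hr vr h := by
  set F : ℝ → ℝ := fun h => phil g hl vl h - phir g hr vr h with hF
  have hFanti : ∀ {x y : ℝ}, 0 < x → x < y → F y < F x := by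
    intro x y hx hxy
    have h1 := phil_anti g hl vl hg hhl hx hxy
    have h2 := phil_anti g hr (-vr) hg hhr hx hxy
    simp only [hF, phir_eq]
    linarith
  have hFcont : Continuous F :=
    (phil_cont g hl vl hhl).sub (by
      have : phir g hr vr = fun h => - phil g hr (-vr) h := funext (phir_eq g hr vr)
      rw [this]; exact (phil_cont g hr (-vr) hhr).neg)
  set C : ℝ := vl + 2 * Real.sqrt (g * hl) - (vr - 2 * Real.sqrt (g * hr)) with hCdef
  have hC : 0 < C := by simp only [hCdef]; linarith
  -- the small point
  set a : ℝ := min (min hl hr) (C ^ 2 / (64 * g)) with hadef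
  have ha0 : 0 < a := lt_min (lt_min hhl hhr) (by positivity)
  have hahl : a ≤ hl := le_trans (min_le_left _ _) (min_le_left _ _)
  have hahr : a ≤ hr := le_trans (min_le_left _ _) (min_le_right _ _)
  have hFa : 0 < F a := by
    have e1 : phil g hl vl a = vl + 2 * Real.sqrt (g * hl) - 2 * Real.sqrt (g * a) := by
      rw [phil, if_pos hahl]
    have e2 : phir g hr vr a = vr - 2 * Real.sqrt (g * hr) + 2 * Real.sqrt (g * a) := by
      rw [phir, if_pos hahr]
    have hb1 : Real.sqrt (g * a) ≤ Real.sqrt (C ^ 2 / 64) := by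
      apply Real.sqrt_le_sqrt
      have h1 : a ≤ C ^ 2 / (64 * g) := min_le_right _ _
      have h2 : a * (64 * g) ≤ C ^ 2 := (le_div_iff₀ (by positivity)).1 h1
      rw [le_div_iff₀ (by norm_num : (0:ℝ) < 64)]
      nlinarith
    have hb2 : Real.sqrt (C ^ 2 / 64) = C / 8 := by
      rw [show C ^ 2 / 64 = (C / 8) ^ 2 by ring, Real.sqrt_sq (by positivity)]
    simp only [hF, e1, e2]
    rw [hb2] at hb1
    have : vl + 2 * Real.sqrt (g * hl) - (vr - 2 * Real.sqrt (g * hr)) = C := rfl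
    linarith
  -- the large point
  set c : ℝ := Real.sqrt (g / (2 * hl)) with hcdef
  have hc : 0 < c := Real.sqrt_pos.2 (by positivity)
  set m : ℝ := max 0 ((vl - vr) / c) with hmdef
  have hm0 : 0 ≤ m := le_max_left _ _
  have hmc : vl - vr ≤ m * c := by
    have : (vl - vr) / c ≤ m := le_max_right _ _
    calc vl - vr = (vl - vr) / c * c := by field_simp
    _ ≤ m * c := by nlinarith
  set b : ℝ := max hl hr + 1 + m with hbdef
  have hbl : hl < b := by
    have := le_max_left hl hr; simp only [hbdef]; linarith
  have hbr : hr < b := by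
    have := le_max_right hl hr; simp only [hbdef]; linarith
  have hb0 : 0 < b := hhl.trans hbl
  have hFb : F b < 0 := by
    have e1 : phil g hl vl b = vl - (b - hl) * Real.sqrt (g * (b + hl) / (2 * b * hl)) := by
      rw [phil, if_neg (not_le.2 hbl)]
    have e2 : phir g hr vr b = vr + (b - hr) * Real.sqrt (g * (b + hr) / (2 * b * hr)) := by
      rw [phir, if_neg (not_le.2 hbr)]
    have hs1 : c ≤ Real.sqrt (g * (b + hl) / (2 * b * hl)) := by
      apply Real.sqrt_le_sqrt
      rw [div_le_div_iff₀ (by positivity) (by positivity)]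
      nlinarith [mul_pos hg (mul_pos hhl hhl)]
    have hbm : 1 + m ≤ b - hl := by
      have := le_max_left hl hr; simp only [hbdef]; linarith
    have key : vl - vr < (b - hl) * Real.sqrt (g * (b + hl) / (2 * b * hl)) := by
      have h1 : (1 + m) * c ≤ (b - hl) * Real.sqrt (g * (b + hl) / (2 * b * hl)) :=
        mul_le_mul hbm hs1 hc.le (by linarith)
      nlinarith
    have hnn : 0 ≤ (b - hr) * Real.sqrt (g * (b + hr) / (2 * b * hr)) :=
      mul_nonneg (by linarith) (Real.sqrt_nonneg _)
    simp only [hF, e1, e2]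
    linarith
  -- intermediate value theorem
  have hab : a ≤ b := by
    have : a ≤ hl := hahl
    linarith
  have hsub : Set.Icc (F b) (F a) ⊆ F '' Set.Icc a b :=
    intermediate_value_Icc' hab hFcont.continuousOn
  obtain ⟨h0, hmem, hF0⟩ := hsub ⟨hFb.le, hFa.le⟩
  have h0pos : 0 < h0 := lt_of_lt_of_le ha0 hmem.1
  refine ⟨h0, ⟨h0pos, by simpa [hF, sub_eq_zero] using hF0⟩, ?_⟩
  rintro y ⟨hy0, hyeq⟩
  have hFy : F y = 0 := by simp [hF, hyeq]
  by_contra hne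
  rcases lt_or_gt_of_ne hne with h | h
  · have := hFanti hy0 h
    rw [hFy, hF0] at this; exact lt_irrefl 0 this
  · have := hFanti h0pos h
    rw [hFy, hF0] at this; exact lt_irrefl 0 this
end

section
/- Let (h_m, v_m) be a middle state with h_m > 0 and −√(g h_m) ≤ v_m < 0, and let 0 < h < h_m. Put q_m = h_m·v_m and q = h·(v_m − (h_m − h)·√(g (h + h_m)/(2 h h_m))) (the point on the 2-shock curve through (h_m,v_m)). Then the Rankine–Hugoniot shock speed λ = (q_m − q)/(h_m − h) satisfies λ ≤ 0 if and only if h ≤ (h_m/2)(−1 + √(1 + 8 v_m²/(g h_m))). -/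
private lemma sq_le_imp (a b : ℝ) (ha : 0 ≤ a) (hb : 0 ≤ b) (hab : a ^ 2 ≤ b ^ 2) :
    a ≤ b := by
  calc a = Real.sqrt (a ^ 2) := (Real.sqrt_sq ha).symm
    _ ≤ Real.sqrt (b ^ 2) := Real.sqrt_le_sqrt hab
    _ = b := Real.sqrt_sq hb

/-- The Rankine–Hugoniot speed of the `2`-shock joining `(h, S₂(h_m, v_m; h))` to the
middle state `(h_m, v_m)` (with `−√(g h_m) ≤ v_m < 0` and `0 < h < h_m`) is
non-positive if and only if `h ≤ (h_m/2)(−1 + √(1 + 8 F_m²))`. -/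
theorem two_shock_nonpositive_speed_iff (g hm vm h : ℝ) (hg : 0 < g) (hhm : 0 < hm)
    (hv₁ : -Real.sqrt (g * hm) ≤ vm) (hv₂ : vm < 0) (hh₁ : 0 < h) (hh₂ : h < hm) :
    (hm * vm - h * (vm - (hm - h) * Real.sqrt (g * (h + hm) / (2 * h * hm)))) / (hm - h)
        ≤ 0 ↔
      h ≤ hm / 2 * (-1 + Real.sqrt (1 + 8 * vm ^ 2 / (g * hm))) := by
  have hhm' : (0:ℝ) < hm - h := by linarith
  have hne : hm - h ≠ 0 := ne_of_gt hhm'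
  set s := Real.sqrt (g * (h + hm) / (2 * h * hm)) with hs_def
  have harg : 0 ≤ g * (h + hm) / (2 * h * hm) := by positivity
  have hs2 : s ^ 2 = g * (h + hm) / (2 * h * hm) := Real.sq_sqrt harg
  have hs0 : 0 ≤ s := Real.sqrt_nonneg _
  set r := Real.sqrt (1 + 8 * vm ^ 2 / (g * hm)) with hr_def
  have hrarg : 0 ≤ 1 + 8 * vm ^ 2 / (g * hm) := by positivity
  have hr2 : r ^ 2 = 1 + 8 * vm ^ 2 / (g * hm) := Real.sq_sqrt hrarg
  have hr0 : 0 ≤ r := Real.sqrt_nonneg _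
  have hsimp : (hm * vm - h * (vm - (hm - h) * s)) / (hm - h) = vm + h * s := by
    field_simp
    ring
  rw [hsimp]
  have key : (h * s) ^ 2 = g * h * (h + hm) / (2 * hm) := by
    rw [mul_pow, hs2]
    field_simp
  have hP : (vm + h * s ≤ 0) ↔ g * h * (h + hm) ≤ 2 * hm * vm ^ 2 := by
    constructor
    · intro hle
      have h1 : h * s ≤ -vm := by linarith
      have h2 : (h * s) ^ 2 ≤ vm ^ 2 := by nlinarith [mul_nonneg hh₁.le hs0]
      rw [key] at h2
      have h3 := (div_le_iff₀ (by linarith : (0:ℝ) < 2 * hm)).mp h2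
      nlinarith
    · intro hle
      have h2 : (h * s) ^ 2 ≤ (-vm) ^ 2 := by
        rw [key, div_le_iff₀ (by linarith : (0:ℝ) < 2 * hm)]
        nlinarith
      have := sq_le_imp (h * s) (-vm) (mul_nonneg hh₁.le hs0) (by linarith) h2
      linarith
  rw [hP]
  have hmr2 : (hm * r) ^ 2 = hm ^ 2 + 8 * hm * vm ^ 2 / g := by
    rw [mul_pow, hr2]
    field_simp
  constructor
  · intro hle
    have h5 : 4 * h * (h + hm) ≤ 8 * hm * vm ^ 2 / g := by
      rw [le_div_iff₀ hg]; nlinarith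
    have h4 : (2 * h + hm) ^ 2 ≤ (hm * r) ^ 2 := by
      rw [hmr2]; nlinarith
    have h6 := sq_le_imp (2 * h + hm) (hm * r) (by linarith) (by positivity) h4
    linarith
  · intro hle
    have h6 : 2 * h + hm ≤ hm * r := by linarith
    have h4 : (2 * h + hm) ^ 2 ≤ (hm * r) ^ 2 := by
      have := pow_le_pow_left₀ (by linarith : (0:ℝ) ≤ 2 * h + hm) h6 2
      exact this
    rw [hmr2] at h4
    have h7 : (hm ^ 2 + 8 * hm * vm ^ 2 / g) * g = hm ^ 2 * g + 8 * hm * vm ^ 2 := by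
      field_simp
    have h8 : (2 * h + hm) ^ 2 * g ≤ hm ^ 2 * g + 8 * hm * vm ^ 2 := by
      calc (2 * h + hm) ^ 2 * g ≤ (hm ^ 2 + 8 * hm * vm ^ 2 / g) * g :=
            mul_le_mul_of_nonneg_right h4 hg.le
        _ = hm ^ 2 * g + 8 * hm * vm ^ 2 := h7
    have h9 : (2 * h + hm) ^ 2 * g = 4 * (g * h * (h + hm)) + hm ^ 2 * g := by ring
    linarith
end

section
/- Let h₁, h₂ > 0 and v₁, v₂ ∈ ℝ with v₁ ≠ 0, and assume conservation of mass h₁·v₁ = h₂·v₂ and equality of specific energy v₁²/2 + g·h₁ = v₂²/2 + g·h₂. Then either h₁ = h₂, or h₂/h₁ = (F₁²/4)·(1 + √(1 + 8/F₁²)), where F₁² = v₁²/(g h₁). -/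
/-- At a junction with conservation of mass and equal specific energy, the two
heights either coincide or satisfy `h₂/h₁ = (F₁²/4)(1 + √(1 + 8/F₁²))`. -/
theorem equal_energy_height_ratio (g h₁ h₂ v₁ v₂ : ℝ) (hg : 0 < g)
    (hh₁ : 0 < h₁) (hh₂ : 0 < h₂) (hv₁ : v₁ ≠ 0)
    (hmass : h₁ * v₁ = h₂ * v₂)
    (henergy : v₁ ^ 2 / 2 + g * h₁ = v₂ ^ 2 / 2 + g * h₂) :
    h₁ = h₂ ∨
      h₂ / h₁ = (v₁ ^ 2 / (g * h₁)) / 4 *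
        (1 + Real.sqrt (1 + 8 / (v₁ ^ 2 / (g * h₁)))) := by
  by_cases hh : h₁ = h₂
  · exact Or.inl hh
  right
  have hgh : (0:ℝ) < g * h₁ := mul_pos hg hh₁
  set F : ℝ := v₁ ^ 2 / (g * h₁) with hFdef
  have hv : 0 < v₁ ^ 2 := by positivity
  have hF0 : 0 < F := div_pos hv hgh
  have hv₂ : v₂ = h₁ * v₁ / h₂ := by field_simp; linarith [hmass]
  -- v₁²(h₂+h₁) = 2 g h₂²
  have key : v₁ ^ 2 * (h₂ + h₁) = 2 * g * h₂ ^ 2 := by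
    have hsub : h₂ - h₁ ≠ 0 := sub_ne_zero.mpr (Ne.symm hh)
    have h1 : v₁ ^ 2 * (h₂ ^ 2 - h₁ ^ 2) = 2 * g * h₂ ^ 2 * (h₂ - h₁) := by
      rw [hv₂] at henergy
      field_simp at henergy
      nlinarith [henergy]
    have h2 : (v₁ ^ 2 * (h₂ + h₁) - 2 * g * h₂ ^ 2) * (h₂ - h₁) = 0 := by ring_nf; nlinarith [h1]
    have := (mul_eq_zero.mp h2).resolve_right hsub
    linarith
  set r : ℝ := h₂ / h₁ with hrdef
  have hr0 : 0 < r := div_pos hh₂ hh₁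
  have hquad : 2 * r ^ 2 = F * (r + 1) := by
    rw [hrdef, hFdef]
    field_simp
    nlinarith [key]
  set s : ℝ := Real.sqrt (F ^ 2 + 8 * F) with hsdef
  have hs0 : 0 ≤ s := Real.sqrt_nonneg _
  have hs2 : s ^ 2 = F ^ 2 + 8 * F := Real.sq_sqrt (by nlinarith)
  have hge : 0 ≤ 4 * r - F := by nlinarith
  have hsq : (4 * r - F) ^ 2 = s ^ 2 := by rw [hs2]; nlinarith
  have h4r : 4 * r - F = s := by
    rw [← Real.sqrt_sq hge, hsq, Real.sqrt_sq hs0]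
  have hF' : F ≠ 0 := ne_of_gt hF0
  have h18 : 1 + 8 / F = (s / F) ^ 2 := by
    rw [div_pow, hs2]; field_simp
  have hsqrt : Real.sqrt (1 + 8 / F) = s / F := by
    rw [h18]; exact Real.sqrt_sq (by positivity)
  rw [hsqrt]
  have hr4 : r = (F + s) / 4 := by linarith
  rw [hr4]; field_simp
end

section
/- Let h₁, h₂ > 0 and q ∈ ℝ, and assume equality of momentum flux q²/h₁ + g·h₁²/2 = q²/h₂ + g·h₂²/2. Then either h₁ = h₂, or h₂/h₁ = (−1 + √(1 + 8 F₁²))/2, where F₁² = q²/(g h₁³). -/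
/-- At a junction with common discharge `q` and equal momentum flux, the two
heights either coincide or satisfy `h₂/h₁ = (−1 + √(1 + 8 F₁²))/2`. -/
theorem equal_momentum_height_ratio (g h₁ h₂ q : ℝ) (hg : 0 < g)
    (hh₁ : 0 < h₁) (hh₂ : 0 < h₂)
    (hmom : q ^ 2 / h₁ + g * h₁ ^ 2 / 2 = q ^ 2 / h₂ + g * h₂ ^ 2 / 2) :
    h₁ = h₂ ∨
      h₂ / h₁ = (-1 + Real.sqrt (1 + 8 * (q ^ 2 / (g * h₁ ^ 3)))) / 2 := by
  by_cases heq : h₁ = h₂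
  · exact Or.inl heq
  right
  have hne : h₂ - h₁ ≠ 0 := fun h => heq (by linarith [sub_eq_zero.mp h])
  have h1 : h₁ ≠ 0 := ne_of_gt hh₁
  have h2 : h₂ ≠ 0 := ne_of_gt hh₂
  have hgne : g ≠ 0 := ne_of_gt hg
  have hcancel : (h₂ - h₁) * (2 * q ^ 2 - g * h₁ * h₂ * (h₁ + h₂)) = 0 := by
    field_simp at hmom
    nlinarith [hmom]
  have hq : 2 * q ^ 2 = g * h₁ * h₂ * (h₁ + h₂) := by
    rcases mul_eq_zero.mp hcancel with h | h
    · exact absurd h hne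
    · linarith
  have hsq : 1 + 8 * (q ^ 2 / (g * h₁ ^ 3)) = ((h₁ + 2 * h₂) / h₁) ^ 2 := by
    field_simp
    nlinarith [hq]
  rw [hsq, Real.sqrt_sq (by positivity)]
  field_simp
  ring
end
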